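/- On the secondary Hochschild complex C^•(A,B,ε), with λ the signed cyclic operator, N = 1 + λ + ⋯ + λ^n, b the full differential and b' the truncated differential, the identities N(1 − λ) = (1 − λ)N = 0 and b ∘ N = N ∘ b' hold. -/

import Mathlib

open scoped TensorProduct
open MulOpposite PiTensorProduct

noncomputable section

/-- Index set for the strictly upper triangular positions of an `m × m` matrix. -/
abbrev UT (m : ℕ) := {p : Fin m × Fin m // p.1 < p.2}

/-- The tensor space `A^{⊗ m} ⊗ B^{⊗ m(m-1)/2}` in its matrix representation. -/
def TS (k A B : Type) [Field k] [Ring A] [Algebra k A] [CommRing B] [Algebra k B]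
    (m : ℕ) : Type :=
  (⨂[k] _ : Fin m, A) ⊗[k] (⨂[k] _ : UT m, B)

variable (k A B : Type) [Field k] [Ring A] [Algebra k A] [CommRing B] [Algebra k B]

instance (m : ℕ) : AddCommGroup (TS k A B m) :=
  inferInstanceAs (AddCommGroup ((⨂[k] _ : Fin m, A) ⊗[k] (⨂[k] _ : UT m, B)))

instance (m : ℕ) : Module k (TS k A B m) :=
  inferInstanceAs (Module k ((⨂[k] _ : Fin m, A) ⊗[k] (⨂[k] _ : UT m, B)))

/-- The secondary Hochschild cochain space `C^n(A,B,ε) = Hom_k(A^{⊗(n+1)} ⊗ B^{⊗ n(n+1)/2}, k)`. -/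
abbrev Cc (n : ℕ) : Type := TS k A B (n + 1) →ₗ[k] k

/-- The pure tensor (generator) determined by diagonal entries `a` and
upper-triangular entries `β` (read at indices `< m`). -/
def gen (m : ℕ) (a : ℕ → A) (β : ℕ → ℕ → B) : TS k A B m :=
  (tprod k fun i : Fin m => a i) ⊗ₜ[k] (tprod k fun p : UT m => β p.1.1 p.1.2)

/-- Diagonal of the matrix obtained by merging diagonal entries `i`, `i+1` via
`a_i a_{i+1} ε(b_{i,i+1})`. -/
def mergeA (ε : B →ₐ[k] A) (i : ℕ) (a : ℕ → A) (β : ℕ → ℕ → B) : ℕ → A :=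
  fun j => if j < i then a j else if j = i then a i * a (i + 1) * ε (β i (i + 1)) else a (j + 1)

/-- Preimages of the index `p` under the monotone surjection collapsing `i` and `i+1`. -/
def preim (i p : ℕ) : Finset ℕ :=
  if p < i then {p} else if p = i then {i, i + 1} else {p + 1}

/-- `B`-entries of the matrix obtained by merging rows/columns `i` and `i+1`. -/
def mergeB (i : ℕ) (β : ℕ → ℕ → B) : ℕ → ℕ → B :=
  fun p q => ∏ u ∈ preim i p, ∏ v ∈ preim i q, β u v

/-- Diagonal of the "cyclic merge": `a_m a_0 ε(b_{0,m})` in position `0`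
(top index `m`). -/
def cmergeA (ε : B →ₐ[k] A) (m : ℕ) (a : ℕ → A) (β : ℕ → ℕ → B) : ℕ → A :=
  fun j => if j = 0 then a m * a 0 * ε (β 0 m) else a j

/-- `B`-entries of the cyclic merge: first row becomes `b_{q,m} b_{0,q}`. -/
def cmergeB (m : ℕ) (β : ℕ → ℕ → B) : ℕ → ℕ → B :=
  fun p q => if p = 0 then β q m * β 0 q else β p q

/-- Diagonal of the cyclically rotated matrix: `a_n` moves to position `0`. -/
def rotA (n : ℕ) (a : ℕ → A) : ℕ → A :=
  fun j => if j = 0 then a n else a (j - 1)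

/-- `B`-entries of the cyclically rotated matrix: the first row becomes
`b_{0,n}, …, b_{n-1,n}`. -/
def rotB (n : ℕ) (β : ℕ → ℕ → B) : ℕ → ℕ → B :=
  fun p q => if p = 0 then β (q - 1) n else β (p - 1) (q - 1)

/-!
STATEMENT 9: on `C^•(A,B,ε)` with `λ` the signed cyclic operator,
`N = 1 + λ + ⋯ + λ^n`, `b` the full differential and `b'` the truncated one:
`N(1 − λ) = (1 − λ)N = 0` and `b ∘ N = N ∘ b'`.
-/

set_option linter.unusedSectionVars false

lemma neg_one_pow_congr_mod {a b : ℕ} (h : a % 2 = b % 2) : ((-1 : ℤ)) ^ a = (-1) ^ b := by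
  rcases Nat.even_or_odd a with ha | ha
  · obtain ⟨c, hc⟩ := ha
    have hb : Even b := ⟨b / 2, by omega⟩
    have ha' : Even (c + c) := ⟨c, rfl⟩
    rw [hc, ha'.neg_one_pow, hb.neg_one_pow]
  · obtain ⟨c, hc⟩ := ha
    have hb : Odd b := ⟨b / 2, by omega⟩
    have ha' : Odd (2 * c + 1) := ⟨c, rfl⟩
    rw [hc, ha'.neg_one_pow, hb.neg_one_pow]

lemma gen_congr {m : ℕ} {a a' : ℕ → A} {β β' : ℕ → ℕ → B}
    (hA : ∀ i < m, a i = a' i) (hB : ∀ p q, p < q → q < m → β p q = β' p q) :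
    gen k A B m a β = gen k A B m a' β' := by
  unfold gen
  congr 1
  · exact congrArg (PiTensorProduct.tprod k) (funext fun i => hA i i.isLt)
  · exact congrArg (PiTensorProduct.tprod k) (funext fun p => hB _ _ p.2 p.1.2.isLt)

lemma ext_gen {m : ℕ} (ψ χ : TS k A B m →ₗ[k] k)
    (h : ∀ (a : ℕ → A) (β : ℕ → ℕ → B), ψ (gen k A B m a β) = χ (gen k A B m a β)) :
    ψ = χ := by
  apply LinearMap.ext
  intro x
  have key : ∀ (u : ⨂[k] _ : Fin m, A) (v : ⨂[k] _ : UT m, B),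
      ψ (u ⊗ₜ[k] v) = χ (u ⊗ₜ[k] v) := by
    intro u v
    induction u using PiTensorProduct.induction_on with
    | smul_tprod r f =>
      induction v using PiTensorProduct.induction_on with
      | smul_tprod s g =>
        have hg : ((r • tprod k f) ⊗ₜ[k] (s • tprod k g) : TS k A B m)
            = (r * s) • ((tprod k f) ⊗ₜ[k] (tprod k g)) := by
          rw [TensorProduct.smul_tmul_smul]
        set a : ℕ → A := fun i => if h : i < m then f ⟨i, h⟩ else 0 with ha
        set β : ℕ → ℕ → B := fun p q =>
          if h : p < q ∧ q < m then g ⟨(⟨p, lt_trans h.1 h.2⟩, ⟨q, h.2⟩), h.1⟩ else 1 with hβ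
        have hgen : (tprod k f) ⊗ₜ[k] (tprod k g) = gen k A B m a β := by
          unfold gen
          congr 1
          · refine congrArg (PiTensorProduct.tprod k) (funext fun i => ?_)
            simp [ha, i.isLt]
          · refine congrArg (PiTensorProduct.tprod k) (funext fun p => ?_)
            have hp : (p.1.1 : ℕ) < p.1.2 ∧ (p.1.2 : ℕ) < m := ⟨p.2, p.1.2.isLt⟩
            simp only [hβ, dif_pos hp]
        rw [hg]
        have e := h a β
        rw [← hgen] at e
        exact (map_smul ψ (r * s) _).trans ((congrArg ((r * s) • ·) e).trans (map_smul χ (r * s) _).symm)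
      | add v₁ v₂ ih₁ ih₂ =>
        rw [TensorProduct.tmul_add]
        exact (map_add ψ _ _).trans ((congrArg₂ (· + ·) ih₁ ih₂).trans (map_add χ _ _).symm)
    | add u₁ u₂ ih₁ ih₂ =>
      rw [TensorProduct.add_tmul]
      exact (map_add ψ _ _).trans ((congrArg₂ (· + ·) ih₁ ih₂).trans (map_add χ _ _).symm)
  induction x using TensorProduct.induction_on with
  | zero => exact (map_zero ψ).trans (map_zero χ).symm
  | tmul u v => exact key u v
  | add x y ihx ihy => exact (map_add ψ x y).trans ((congrArg₂ (· + ·) ihx ihy).trans (map_add χ x y).symm)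

lemma prod_pair_succ (f : ℕ → B) (x : ℕ) :
    ∏ u ∈ ({x, x + 1} : Finset ℕ), f u = f x * f (x + 1) :=
  Finset.prod_pair (by omega)

lemma rotA_iter (n : ℕ) (a : ℕ → A) :
    ∀ j, j ≤ n + 1 → ∀ i, i ≤ n →
      (rotA A n)^[j] a i = if i < j then a (i + n + 1 - j) else a (i - j) := by
  intro j
  induction j with
  | zero => intro _ i _; simp
  | succ j ih =>
    intro hj i hi
    rw [Function.iterate_succ_apply']
    by_cases h0 : i = 0
    · subst h0
      simp only [rotA, eq_self_iff_true, if_true]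
      rw [ih (by omega) n le_rfl, if_neg (show ¬ n < j by omega), if_pos (show 0 < j + 1 by omega)]
      congr 1; omega
    · simp only [rotA, if_neg h0]
      rw [ih (by omega) (i - 1) (by omega)]
      by_cases hlt : i - 1 < j
      · rw [if_pos hlt, if_pos (by omega)]; congr 1; omega
      · rw [if_neg hlt, if_neg (by omega)]; congr 1; omega

lemma rotB_iter (n : ℕ) (β : ℕ → ℕ → B) :
    ∀ j, j ≤ n + 1 → ∀ p q, p < q → q ≤ n →
      (rotB B n)^[j] β p q =
        if p < j then
          (if q < j then β (p + n + 1 - j) (q + n + 1 - j) else β (q - j) (p + n + 1 - j))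
        else β (p - j) (q - j) := by
  intro j
  induction j with
  | zero => intro _ p q _ _; simp
  | succ j ih =>
    intro hj p q hpq hq
    rw [Function.iterate_succ_apply']
    by_cases h0 : p = 0
    · subst h0
      simp only [rotB, eq_self_iff_true, if_true]
      rw [ih (by omega) (q - 1) n (by omega) le_rfl]
      split_ifs <;> first | (congr 1 <;> omega) | (exfalso; omega)
    · simp only [rotB, if_neg h0]
      rw [ih (by omega) (p - 1) (q - 1) (by omega) (by omega)]
      split_ifs <;> first | (congr 1 <;> omega) | (exfalso; omega)

set_option linter.unusedSectionVars false

lemma L1A (ε : B →ₐ[k] A) (n i : ℕ) (hi : i < n) (a : ℕ → A) (β : ℕ → ℕ → B) :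
    ∀ j, j < n + 1 →
      mergeA k A B ε (i + 1) (rotA A (n + 1) a) (rotB B (n + 1) β) j
        = rotA A n (mergeA k A B ε i a β) j := by
  intro j hj
  simp only [mergeA, rotA, rotB]
  split_ifs <;> first | rfl | (exfalso; first | assumption | omega) | (congr <;> omega)

set_option maxHeartbeats 1000000 in
lemma L1B (n i : ℕ) (hi : i < n) (β : ℕ → ℕ → B) :
    ∀ p q, p < q → q < n + 1 →
      mergeB B (i + 1) (rotB B (n + 1) β) p q = rotB B n (mergeB B i β) p q := by
  intro p q hpq hq
  simp only [mergeB, preim, rotB]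
  split_ifs <;>
    simp only [Finset.prod_singleton, prod_pair_succ] <;>
    (try split_ifs) <;>
    first | rfl | (exfalso; first | assumption | omega) | (congr <;> omega) | (rw [mul_comm]; congr <;> omega)

lemma L2A (ε : B →ₐ[k] A) (n : ℕ) (a : ℕ → A) (β : ℕ → ℕ → B) :
    ∀ j, j < n + 1 →
      mergeA k A B ε 0 (rotA A (n + 1) a) (rotB B (n + 1) β) j
        = cmergeA k A B ε (n + 1) a β j := by
  intro j hj
  simp only [mergeA, cmergeA, rotA, rotB]
  split_ifs <;> first | rfl | (exfalso; first | assumption | omega) | (congr <;> omega)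

set_option maxHeartbeats 1000000 in
lemma L2B (n : ℕ) (β : ℕ → ℕ → B) :
    ∀ p q, p < q → q < n + 1 →
      mergeB B 0 (rotB B (n + 1) β) p q = cmergeB B (n + 1) β p q := by
  intro p q hpq hq
  simp only [mergeB, preim, cmergeB, rotB]
  split_ifs <;>
    simp only [Finset.prod_singleton, prod_pair_succ] <;>
    (try split_ifs) <;>
    first | rfl | (exfalso; first | assumption | omega) | (congr <;> omega) | (rw [mul_comm]; congr <;> omega)

lemma L3A (ε : B →ₐ[k] A) (n : ℕ) (a : ℕ → A) (β : ℕ → ℕ → B) :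
    ∀ j, j < n + 1 →
      cmergeA k A B ε (n + 1) (rotA A (n + 1) a) (rotB B (n + 1) β) j
        = rotA A n (mergeA k A B ε n a β) j := by
  intro j hj
  simp only [mergeA, cmergeA, rotA, rotB]
  split_ifs <;> first | rfl | (exfalso; first | assumption | omega) | (congr <;> omega)

set_option maxHeartbeats 1000000 in
lemma L3B (n : ℕ) (β : ℕ → ℕ → B) :
    ∀ p q, p < q → q < n + 1 →
      cmergeB B (n + 1) (rotB B (n + 1) β) p q = rotB B n (mergeB B n β) p q := by
  intro p q hpq hq
  simp only [mergeB, preim, cmergeB, rotB]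
  split_ifs <;>
    simp only [Finset.prod_singleton, prod_pair_succ] <;>
    (try split_ifs) <;>
    first | rfl | (exfalso; first | assumption | omega) | (congr <;> omega) | (rw [mul_comm]; congr <;> omega)

lemma gen_rot_congr (n : ℕ) (j : ℕ) {a a' : ℕ → A} {β β' : ℕ → ℕ → B}
    (hA : ∀ i, i < n + 1 → a i = a' i)
    (hB : ∀ p q, p < q → q < n + 1 → β p q = β' p q) :
    gen k A B (n + 1) ((rotA A n)^[j] a) ((rotB B n)^[j] β)
      = gen k A B (n + 1) ((rotA A n)^[j] a') ((rotB B n)^[j] β') := by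
  induction j generalizing a a' β β' with
  | zero =>
    simpa using gen_congr k A B (fun i hi => hA i hi) (fun p q h1 h2 => hB p q h1 h2)
  | succ j ih =>
    rw [Function.iterate_succ_apply, Function.iterate_succ_apply,
      Function.iterate_succ_apply, Function.iterate_succ_apply]
    apply ih
    · intro i hi
      simp only [rotA]
      split_ifs
      · exact hA n (by omega)
      · exact hA (i - 1) (by omega)
    · intro p q hpq hq
      simp only [rotB]
      split_ifs with h
      · exact hB (q - 1) n (by omega) (by omega)
      · exact hB (p - 1) (q - 1) (by omega) (by omega)

lemma lam_pow (lam : ∀ n : ℕ, Module.End k (Cc k A B n))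
    (hlam : ∀ (n : ℕ) (φ : Cc k A B n) (a : ℕ → A) (β : ℕ → ℕ → B),
      lam n φ (gen k A B (n + 1) a β) =
        (-1 : ℤ) ^ n • φ (gen k A B (n + 1) (rotA A n a) (rotB B n β)))
    (n : ℕ) (j : ℕ) (φ : Cc k A B n) (a : ℕ → A) (β : ℕ → ℕ → B) :
    ((lam n ^ j) φ) (gen k A B (n + 1) a β)
      = ((-1 : ℤ) ^ (n * j)) •
          φ (gen k A B (n + 1) ((rotA A n)^[j] a) ((rotB B n)^[j] β)) := by
  induction j generalizing a β with
  | zero => simp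
  | succ j ih =>
    rw [pow_succ', Module.End.mul_apply, hlam, ih (rotA A n a) (rotB B n β), smul_smul,
      ← pow_add, ← Function.iterate_succ_apply, ← Function.iterate_succ_apply]
    congr 2
    ring

lemma lam_pow_eq_one (lam : ∀ n : ℕ, Module.End k (Cc k A B n))
    (hlam : ∀ (n : ℕ) (φ : Cc k A B n) (a : ℕ → A) (β : ℕ → ℕ → B),
      lam n φ (gen k A B (n + 1) a β) =
        (-1 : ℤ) ^ n • φ (gen k A B (n + 1) (rotA A n a) (rotB B n β)))
    (n : ℕ) : lam n ^ (n + 1) = 1 := by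
  apply LinearMap.ext
  intro φ
  apply ext_gen
  intro a β
  rw [lam_pow k A B lam hlam n (n + 1) φ a β, Module.End.one_apply]
  have he : Even (n * (n + 1)) := Nat.even_mul_succ_self n
  rw [he.neg_one_pow, one_smul]
  congr 1
  apply gen_congr
  · intro i hi
    rw [rotA_iter A n a (n + 1) le_rfl i (by omega), if_pos (by omega)]
    congr 1
    omega
  · intro p q hpq hq
    rw [rotB_iter B n β (n + 1) le_rfl p q hpq (by omega),
      if_pos (by omega), if_pos (by omega)]
    congr <;> omega

lemma master (ε : B →ₐ[k] A) (n i : ℕ) (hi : i ≤ n) :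
    ∀ j, j ≤ n + 1 → ∀ (a : ℕ → A) (β : ℕ → ℕ → B),
      gen k A B (n + 1)
          (mergeA k A B ε i ((rotA A (n + 1))^[j] a) ((rotB B (n + 1))^[j] β))
          (mergeB B i ((rotB B (n + 1))^[j] β))
        = if j ≤ i then
            gen k A B (n + 1) ((rotA A n)^[j] (mergeA k A B ε (i - j) a β))
              ((rotB B n)^[j] (mergeB B (i - j) β))
          else if j = i + 1 then
            gen k A B (n + 1) ((rotA A n)^[i] (cmergeA k A B ε (n + 1) a β))
              ((rotB B n)^[i] (cmergeB B (n + 1) β))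
          else
            gen k A B (n + 1) ((rotA A n)^[j - 1] (mergeA k A B ε (n + i + 2 - j) a β))
              ((rotB B n)^[j - 1] (mergeB B (n + i + 2 - j) β)) := by
  intro j
  induction j with
  | zero => intro _ a β; simp
  | succ j ih =>
    intro hj a β
    have hstepA : (rotA A (n + 1))^[j + 1] a = (rotA A (n + 1))^[j] (rotA A (n + 1) a) :=
      Function.iterate_succ_apply _ _ _
    have hstepB : (rotB B (n + 1))^[j + 1] β = (rotB B (n + 1))^[j] (rotB B (n + 1) β) :=
      Function.iterate_succ_apply _ _ _
    rw [hstepA, hstepB, ih (by omega) (rotA A (n + 1) a) (rotB B (n + 1) β)]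
    by_cases h1 : j + 1 ≤ i
    · rw [if_pos (show j ≤ i by omega), if_pos h1]
      set i0 := i - j - 1 with hi0
      have e1 : i - j = i0 + 1 := by omega
      have e2 : i - (j + 1) = i0 := by omega
      rw [e1, e2]
      have := gen_rot_congr k A B n j
        (a := mergeA k A B ε (i0 + 1) (rotA A (n + 1) a) (rotB B (n + 1) β))
        (a' := rotA A n (mergeA k A B ε i0 a β))
        (β := mergeB B (i0 + 1) (rotB B (n + 1) β))
        (β' := rotB B n (mergeB B i0 β))
        (L1A k A B ε n i0 (by omega) a β) (L1B B n i0 (by omega) β)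
      rw [this, ← Function.iterate_succ_apply, ← Function.iterate_succ_apply]
    · by_cases h2 : j + 1 = i + 1
      · rw [if_pos (show j ≤ i by omega), if_neg h1, if_pos h2]
        have e1 : i - j = 0 := by omega
        rw [e1]
        have := gen_rot_congr k A B n j
          (a := mergeA k A B ε 0 (rotA A (n + 1) a) (rotB B (n + 1) β))
          (a' := cmergeA k A B ε (n + 1) a β)
          (β := mergeB B 0 (rotB B (n + 1) β))
          (β' := cmergeB B (n + 1) β)
          (L2A k A B ε n a β) (L2B B n β)
        rw [this, show j = i by omega]
      · rw [if_neg h1, if_neg h2]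
        by_cases h3 : j = i + 1
        · rw [if_neg (show ¬ j ≤ i by omega), if_pos h3]
          have e1 : n + i + 2 - (j + 1) = n := by omega
          have e2 : j + 1 - 1 = i + 1 := by omega
          rw [e1, e2]
          have := gen_rot_congr k A B n i
            (a := cmergeA k A B ε (n + 1) (rotA A (n + 1) a) (rotB B (n + 1) β))
            (a' := rotA A n (mergeA k A B ε n a β))
            (β := cmergeB B (n + 1) (rotB B (n + 1) β))
            (β' := rotB B n (mergeB B n β))
            (L3A k A B ε n a β) (L3B B n β)
          rw [this, ← Function.iterate_succ_apply, ← Function.iterate_succ_apply]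
        · rw [if_neg (show ¬ j ≤ i by omega), if_neg h3]
          set i0 := n + i + 1 - j with hi0
          have e1 : n + i + 2 - j = i0 + 1 := by omega
          have e2 : n + i + 2 - (j + 1) = i0 := by omega
          have e3 : j + 1 - 1 = (j - 1) + 1 := by omega
          rw [e1, e2, e3]
          have := gen_rot_congr k A B n (j - 1)
            (a := mergeA k A B ε (i0 + 1) (rotA A (n + 1) a) (rotB B (n + 1) β))
            (a' := rotA A n (mergeA k A B ε i0 a β))
            (β := mergeB B (i0 + 1) (rotB B (n + 1) β))
            (β' := rotB B n (mergeB B i0 β))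
            (L1A k A B ε n i0 (by omega) a β) (L1B B n i0 (by omega) β)
          rw [this, ← Function.iterate_succ_apply, ← Function.iterate_succ_apply]

lemma key (n : ℕ) (S T : ℕ → ℕ → k) (C : ℕ → k)
    (hT1 : ∀ j i, j ≤ i → i ≤ n → T j i = S j (i - j))
    (hT2 : ∀ i, i ≤ n → T (i + 1) i = C i)
    (hT3 : ∀ j i, i + 2 ≤ j → j ≤ n + 1 → i ≤ n → T j i = S (j - 1) (n + i + 2 - j)) :
    (∑ j ∈ Finset.range (n + 1),
       ((∑ i ∈ Finset.range (n + 1), (-1 : ℤ) ^ i • ((-1 : ℤ) ^ (n * j) • S j i))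
        + (-1 : ℤ) ^ (n + 1) • ((-1 : ℤ) ^ (n * j) • C j)))
    = ∑ j ∈ Finset.range (n + 2), (-1 : ℤ) ^ ((n + 1) * j) •
        ∑ i ∈ Finset.range (n + 1), (-1 : ℤ) ^ i • T j i := by
  have hR : ∀ j, ((-1 : ℤ) ^ ((n + 1) * j)) • ∑ i ∈ Finset.range (n + 1), (-1 : ℤ) ^ i • T j i
      = ∑ i ∈ Finset.range (n + 1), ((-1 : ℤ) ^ ((n + 1) * j + i)) • T j i := by
    intro j
    rw [Finset.smul_sum]
    refine Finset.sum_congr rfl fun i _ => ?_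
    rw [smul_smul, ← pow_add]
  have hL : ∀ j, ((∑ i ∈ Finset.range (n + 1), (-1 : ℤ) ^ i • ((-1 : ℤ) ^ (n * j) • S j i))
        + (-1 : ℤ) ^ (n + 1) • ((-1 : ℤ) ^ (n * j) • C j))
      = (∑ i ∈ Finset.range (n + 1), (-1 : ℤ) ^ (n * j + i) • S j i)
        + (-1 : ℤ) ^ (n * j + (n + 1)) • C j := by
    intro j
    congr 1
    · refine Finset.sum_congr rfl fun i _ => ?_
      rw [smul_smul, ← pow_add, Nat.add_comm i (n * j)]
    · rw [smul_smul, ← pow_add, Nat.add_comm (n + 1) (n * j)]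
  rw [Finset.sum_congr rfl fun j _ => hL j, Finset.sum_congr rfl fun j _ => hR j,
    Finset.sum_add_distrib, ← Finset.sum_product', ← Finset.sum_product',
    ← Finset.sum_filter_add_sum_filter_not (Finset.range (n + 2) ×ˢ Finset.range (n + 1))
      (fun x => x.1 = x.2 + 1)]
  conv_rhs => rw [add_comm]
  congr 1
  · -- merge part
    refine Finset.sum_nbij'
      (fun y => if y.2 + y.1 ≤ n then (y.1, y.2 + y.1) else (y.1 + 1, y.2 + y.1 - (n + 1)))
      (fun x => if x.1 ≤ x.2 then (x.1, x.2 - x.1) else (x.1 - 1, n + x.2 + 2 - x.1))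
      ?_ ?_ ?_ ?_ ?_
    · intro y hy
      simp only [Finset.mem_product, Finset.mem_range] at hy
      obtain ⟨y1, y2⟩ := y
      try dsimp only
      by_cases h : y2 + y1 ≤ n
      · rw [if_pos h]
        simp only [Finset.mem_filter, Finset.mem_product, Finset.mem_range]
        try dsimp only
        omega
      · rw [if_neg h]
        simp only [Finset.mem_filter, Finset.mem_product, Finset.mem_range]
        try dsimp only
        omega
    · intro x hx
      simp only [Finset.mem_filter, Finset.mem_product, Finset.mem_range] at hx
      obtain ⟨x1, x2⟩ := x
      try dsimp only at hx ⊢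
      by_cases h : x1 ≤ x2
      · rw [if_pos h]
        simp only [Finset.mem_product, Finset.mem_range]
        try dsimp only
        omega
      · rw [if_neg h]
        simp only [Finset.mem_product, Finset.mem_range]
        try dsimp only
        omega
    · intro y hy
      simp only [Finset.mem_product, Finset.mem_range] at hy
      obtain ⟨y1, y2⟩ := y
      try dsimp only at hy ⊢
      by_cases h : y2 + y1 ≤ n
      · rw [if_pos h]
        try dsimp only
        rw [if_pos (show y1 ≤ y2 + y1 by omega)]
        simp only [Prod.mk.injEq]
        constructor <;> first | trivial | omega
      · rw [if_neg h]
        try dsimp only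
        rw [if_neg (show ¬ (y1 + 1 ≤ y2 + y1 - (n + 1)) by omega)]
        simp only [Prod.mk.injEq]
        constructor <;> first | trivial | omega
    · intro x hx
      simp only [Finset.mem_filter, Finset.mem_product, Finset.mem_range] at hx
      obtain ⟨x1, x2⟩ := x
      try dsimp only at hx ⊢
      by_cases h : x1 ≤ x2
      · rw [if_pos h]
        try dsimp only
        rw [if_pos (show x2 - x1 + x1 ≤ n by omega)]
        simp only [Prod.mk.injEq]
        constructor <;> first | trivial | omega
      · rw [if_neg h]
        try dsimp only
        rw [if_neg (show ¬ (n + x2 + 2 - x1 + (x1 - 1) ≤ n) by omega)]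
        simp only [Prod.mk.injEq]
        constructor <;> first | trivial | omega
    · intro y hy
      simp only [Finset.mem_product, Finset.mem_range] at hy
      try dsimp only
      by_cases h : y.2 + y.1 ≤ n
      · rw [if_pos h, hT1 y.1 (y.2 + y.1) (by omega) (by omega),
          show y.2 + y.1 - y.1 = y.2 from by omega]
        congr 1
        apply neg_one_pow_congr_mod
        have e : (n + 1) * y.1 = n * y.1 + y.1 := by ring
        rw [e]
        generalize n * y.1 = m
        omega
      · rw [if_neg h, hT3 (y.1 + 1) (y.2 + y.1 - (n + 1)) (by omega) (by omega) (by omega),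
          show y.1 + 1 - 1 = y.1 from by omega,
          show n + (y.2 + y.1 - (n + 1)) + 2 - (y.1 + 1) = y.2 from by omega]
        congr 1
        apply neg_one_pow_congr_mod
        have e : (n + 1) * (y.1 + 1) = n * y.1 + n + y.1 + 1 := by ring
        rw [e]
        generalize n * y.1 = m
        omega
  · -- cyclic part
    refine Finset.sum_nbij' (fun j => (j + 1, j)) (fun x => x.2) ?_ ?_ ?_ ?_ ?_
    · intro j hj
      simp only [Finset.mem_range, Finset.mem_filter, Finset.mem_product] at *
      exact ⟨⟨by omega, by omega⟩, trivial⟩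
    · intro x hx
      simp only [Finset.mem_range, Finset.mem_filter, Finset.mem_product] at *
      omega
    · intro j hj; rfl
    · intro x hx
      simp only [Finset.mem_filter, Finset.mem_product, Finset.mem_range] at hx
      refine Prod.ext ?_ ?_ <;> dsimp only <;> omega
    · intro j hj
      simp only [Finset.mem_range] at hj
      try dsimp only
      rw [hT2 j (by omega)]
      congr 1
      apply neg_one_pow_congr_mod
      have e : (n + 1) * (j + 1) = n * j + n + j + 1 := by ring
      rw [e]
      generalize n * j = m
      omega

theorem secondary_cyclic_norm_identities
    (ε : B →ₐ[k] A) (hcent : ∀ (b : B) (a : A), ε b * a = a * ε b)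
    (lam : ∀ n : ℕ, Module.End k (Cc k A B n))
    (hlam : ∀ (n : ℕ) (φ : Cc k A B n) (a : ℕ → A) (β : ℕ → ℕ → B),
      lam n φ (gen k A B (n + 1) a β) =
        (-1 : ℤ) ^ n • φ (gen k A B (n + 1) (rotA A n a) (rotB B n β)))
    (b : ∀ n : ℕ, Cc k A B n →ₗ[k] Cc k A B (n + 1))
    (hb : ∀ (n : ℕ) (φ : Cc k A B n) (a : ℕ → A) (β : ℕ → ℕ → B),
      b n φ (gen k A B (n + 2) a β) =
        (∑ i ∈ Finset.range (n + 1), (-1 : ℤ) ^ i •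
            φ (gen k A B (n + 1) (mergeA k A B ε i a β) (mergeB B i β)))
        + (-1 : ℤ) ^ (n + 1) •
            φ (gen k A B (n + 1) (cmergeA k A B ε (n + 1) a β) (cmergeB B (n + 1) β)))
    (btr : ∀ n : ℕ, Cc k A B n →ₗ[k] Cc k A B (n + 1))
    (hbtr : ∀ (n : ℕ) (φ : Cc k A B n) (a : ℕ → A) (β : ℕ → ℕ → B),
      btr n φ (gen k A B (n + 2) a β) =
        ∑ i ∈ Finset.range (n + 1), (-1 : ℤ) ^ i •
            φ (gen k A B (n + 1) (mergeA k A B ε i a β) (mergeB B i β)))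
    (N : ∀ n : ℕ, Module.End k (Cc k A B n))
    (hN : ∀ n, N n = ∑ j ∈ Finset.range (n + 1), lam n ^ j) :
    (∀ n, N n * (1 - lam n) = 0) ∧
    (∀ n, (1 - lam n) * N n = 0) ∧
    (∀ n, (b n).comp (N n : Cc k A B n →ₗ[k] Cc k A B n) =
      (N (n + 1) : Cc k A B (n + 1) →ₗ[k] Cc k A B (n + 1)).comp (btr n)) := by
  refine ⟨?_, ?_, ?_⟩
  · intro n
    rw [hN n]
    have h := geom_sum_mul (lam n) (n + 1)
    rw [lam_pow_eq_one k A B lam hlam n, sub_self] at h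
    apply LinearMap.ext; intro φ
    have h2 := LinearMap.congr_fun h φ
    simp only [Module.End.mul_apply, LinearMap.sub_apply, Module.End.one_apply, map_sub,
      LinearMap.zero_apply] at h2 ⊢
    rw [← neg_sub, h2, neg_zero]
  · intro n
    rw [hN n]
    have h := mul_geom_sum (lam n) (n + 1)
    rw [lam_pow_eq_one k A B lam hlam n, sub_self] at h
    apply LinearMap.ext; intro φ
    have h2 := LinearMap.congr_fun h φ
    simp only [Module.End.mul_apply, LinearMap.sub_apply, Module.End.one_apply, map_sub,
      LinearMap.zero_apply] at h2 ⊢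
    rw [← neg_sub, h2, neg_zero]
  · intro n
    apply LinearMap.ext
    intro φ
    apply ext_gen k A B (m := n + 2)
    intro a β
    simp only [LinearMap.comp_apply]
    rw [hN n, hN (n + 1)]
    simp only [LinearMap.sum_apply, map_sum]
    simp only [hb, hbtr, lam_pow k A B lam hlam]
    refine key k n _ _ _ ?_ ?_ ?_
    · intro j i hji hi
      have hm := master k A B ε n i hi j (by omega) a β
      rw [if_pos hji] at hm
      exact congrArg φ hm
    · intro i hi
      have hm := master k A B ε n i hi (i + 1) (by omega) a β
      rw [if_neg (by omega), if_pos rfl] at hm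
      exact congrArg φ hm
    · intro j i h2 hj hi
      have hm := master k A B ε n i hi j hj a β
      rw [if_neg (by omega), if_neg (by omega)] at hm
      exact congrArg φ hm

end
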